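/- Let α ∈ (0,1) and let f : ℝ → ℂ be a bounded measurable function with ∫_ℝ |f(x)|/(1+|x|^{1−α}) dx < ∞. Then for every t ∈ ℝ the integral (U_α f)(t) = ∫_ℝ f(x)·|t−x|^{α−1} dx converges absolutely, and there is a constant C depending only on α such that |(U_α f)(s) − (U_α f)(t)| ≤ C·(sup_ℝ |f|)·|s−t|^α for all s, t ∈ ℝ; in particular U_α f satisfies Hölder's condition with exponent α. -/

import Mathlib

open MeasureTheory

namespace Statement19Aux

open Set Real

/-! ### Reflection transfer lemmas -/

lemma refl_mp (c : ℝ) : MeasurePreserving (fun x : ℝ => c - x) volume volume :=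
  Measure.measurePreserving_sub_left volume c

lemma refl_emb (c : ℝ) : MeasurableEmbedding (fun x : ℝ => c - x) :=
  (MeasurableEquiv.subLeft c).measurableEmbedding

lemma refl_integrableOn {g : ℝ → ℝ} {s : Set ℝ} (c : ℝ) (hg : IntegrableOn g s) :
    IntegrableOn (fun x : ℝ => g (c - x)) ((fun x : ℝ => c - x) ⁻¹' s) :=
  ((refl_mp c).integrableOn_comp_preimage (refl_emb c)).mpr hg

lemma refl_setIntegral (g : ℝ → ℝ) (c : ℝ) (s : Set ℝ) :
    ∫ x in (fun x : ℝ => c - x) ⁻¹' s, g (c - x) = ∫ y in s, g y :=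
  (refl_mp c).setIntegral_preimage_emb (refl_emb c) g s

/-! ### Measurability of the kernel -/

lemma measurable_abs_rpow (c β : ℝ) : Measurable (fun x : ℝ => |c - x| ^ β) := by
  have hfun : (fun x : ℝ => |c - x| ^ β)
      = fun x => if c - x = 0 then (0:ℝ) ^ β else Real.exp (Real.log |c - x| * β) := by
    funext x
    by_cases hx : c - x = 0
    · simp [hx]
    · rw [if_neg hx, Real.rpow_def_of_pos (abs_pos.mpr hx)]
  rw [hfun]
  have hset : MeasurableSet {x : ℝ | c - x = 0} := by
    have : {x : ℝ | c - x = 0} = {c} := by ext x; simp [sub_eq_zero, eq_comm]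
    rw [this]; exact measurableSet_singleton c
  exact Measurable.ite hset measurable_const
    (Real.measurable_exp.comp
      ((Real.measurable_log.comp (measurable_const.sub measurable_id).abs).mul measurable_const))

/-! ### Model integrals -/

lemma model_near {β : ℝ} (hβ : -1 < β) {r : ℝ} (hr : 0 ≤ r) :
    IntegrableOn (fun y : ℝ => |y| ^ β) (Icc (-r) r) ∧
      ∫ y in Icc (-r) r, |y| ^ β = 2 * (r ^ (β + 1) / (β + 1)) := by
  have hb1 : (0:ℝ) < β + 1 := by linarith
  have heq : EqOn (fun y : ℝ => |y| ^ β) (fun y : ℝ => y ^ β) (Ioc 0 r) := fun y hy => by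
    simp only; rw [abs_of_pos hy.1]
  have hint_pos : IntegrableOn (fun y : ℝ => |y| ^ β) (Ioc 0 r) := by
    have h1 := intervalIntegral.intervalIntegrable_rpow' (a := 0) (b := r) hβ
    rw [intervalIntegrable_iff_integrableOn_Ioc_of_le hr] at h1
    exact h1.congr_fun heq.symm measurableSet_Ioc
  have hval_pos : ∫ y in Ioc 0 r, |y| ^ β = r ^ (β + 1) / (β + 1) := by
    rw [setIntegral_congr_fun measurableSet_Ioc heq, ← intervalIntegral.integral_of_le hr,
      _root_.integral_rpow (Or.inl hβ), Real.zero_rpow (ne_of_gt hb1), sub_zero]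
  have hint_pos' : IntegrableOn (fun y : ℝ => |y| ^ β) (Icc 0 r) :=
    (integrableOn_Icc_iff_integrableOn_Ioc (f := fun y : ℝ => |y| ^ β) enorm_ne_top).mpr hint_pos
  have hval_pos' : ∫ y in Icc 0 r, |y| ^ β = r ^ (β + 1) / (β + 1) := by
    rw [integral_Icc_eq_integral_Ioc]; exact hval_pos
  have hpre : Icc (-r) (0:ℝ) = (fun y : ℝ => (0:ℝ) - y) ⁻¹' Icc 0 r := by
    ext y
    simp only [mem_Icc, mem_preimage, zero_sub]
    constructor <;> intro h <;> exact ⟨by linarith [h.1, h.2], by linarith [h.1, h.2]⟩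
  have habs : ∀ y : ℝ, |(0:ℝ) - y| ^ β = |y| ^ β := fun y => by rw [zero_sub, abs_neg]
  have hint_neg : IntegrableOn (fun y : ℝ => |y| ^ β) (Icc (-r) 0) := by
    have h2 := refl_integrableOn (c := 0) hint_pos'
    rw [← hpre] at h2
    exact h2.congr_fun (fun y _ => habs y) measurableSet_Icc
  have hval_neg : ∫ y in Icc (-r) 0, |y| ^ β = r ^ (β + 1) / (β + 1) := by
    have h2 := refl_setIntegral (fun y : ℝ => |y| ^ β) 0 (Icc 0 r)
    rw [← hpre] at h2
    rw [← hval_pos', ← h2]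
    exact setIntegral_congr_fun measurableSet_Icc fun y _ => (habs y).symm
  have hsplit : Icc (-r) r = Icc (-r) 0 ∪ Ioc 0 r := (Icc_union_Ioc_eq_Icc (by linarith) hr).symm
  have hdisj : Disjoint (Icc (-r) (0:ℝ)) (Ioc 0 r) := by
    rw [Set.disjoint_left]; rintro x ⟨_, hx0⟩ ⟨h0x, _⟩; linarith
  constructor
  · rw [hsplit]; exact hint_neg.union hint_pos
  · rw [hsplit, setIntegral_union hdisj measurableSet_Ioc hint_neg hint_pos, hval_neg, hval_pos]
    ring

lemma model_far {p : ℝ} (hp : p < -1) {c : ℝ} (hc : 0 < c) :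
    IntegrableOn (fun y : ℝ => |y| ^ p) {y : ℝ | c < |y|} ∧
      ∫ y in {y : ℝ | c < |y|}, |y| ^ p = 2 * (-(c ^ (p + 1)) / (p + 1)) := by
  have hset : {y : ℝ | c < |y|} = Iio (-c) ∪ Ioi c := by
    ext y
    simp only [mem_setOf_eq, mem_union, mem_Iio, mem_Ioi, lt_abs]
    constructor
    · rintro (h | h)
      exacts [Or.inr h, Or.inl (by linarith)]
    · rintro (h | h)
      exacts [Or.inr (by linarith), Or.inl h]
  have heq : EqOn (fun y : ℝ => |y| ^ p) (fun y : ℝ => y ^ p) (Ioi c) := fun y hy => by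
    simp only; rw [abs_of_pos (hc.trans hy)]
  have hint_pos : IntegrableOn (fun y : ℝ => |y| ^ p) (Ioi c) :=
    (integrableOn_Ioi_rpow_of_lt hp hc).congr_fun heq.symm measurableSet_Ioi
  have hval_pos : ∫ y in Ioi c, |y| ^ p = -(c ^ (p + 1)) / (p + 1) := by
    rw [setIntegral_congr_fun measurableSet_Ioi heq]
    simpa using integral_Ioi_rpow_of_lt hp hc
  have hpre : Iio (-c) = (fun y : ℝ => (0:ℝ) - y) ⁻¹' Ioi c := by
    ext y
    simp only [mem_Iio, mem_preimage, mem_Ioi, zero_sub]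
    constructor <;> intro h <;> linarith
  have habs : ∀ y : ℝ, |(0:ℝ) - y| ^ p = |y| ^ p := fun y => by rw [zero_sub, abs_neg]
  have hint_neg : IntegrableOn (fun y : ℝ => |y| ^ p) (Iio (-c)) := by
    have h2 := refl_integrableOn (c := 0) hint_pos
    rw [← hpre] at h2
    exact h2.congr_fun (fun y _ => habs y) measurableSet_Iio
  have hval_neg : ∫ y in Iio (-c), |y| ^ p = -(c ^ (p + 1)) / (p + 1) := by
    have h2 := refl_setIntegral (fun y : ℝ => |y| ^ p) 0 (Ioi c)
    rw [← hpre] at h2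
    rw [← hval_pos, ← h2]
    exact setIntegral_congr_fun measurableSet_Iio fun y _ => (habs y).symm
  have hdisj : Disjoint (Iio (-c)) (Ioi c) := by
    rw [Set.disjoint_left]; intro x hx hx'
    simp only [mem_Iio] at hx
    simp only [mem_Ioi] at hx'
    linarith
  constructor
  · rw [hset]; exact hint_neg.union hint_pos
  · rw [hset, setIntegral_union hdisj measurableSet_Ioi hint_neg hint_pos, hval_neg, hval_pos]
    ring

/-! ### Mean value estimate for rpow -/

lemma rpow_diff_le {β : ℝ} (hβ0 : β < 0) {m a b : ℝ} (hm : 0 < m) (ha : m ≤ a) (hb : m ≤ b) :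
    |a ^ β - b ^ β| ≤ -β * m ^ (β - 1) * |a - b| := by
  have hder : ∀ x ∈ Ici m, HasDerivWithinAt (fun x : ℝ => x ^ β) (β * x ^ (β - 1)) (Ici m) x :=
    fun x hx =>
      (Real.hasDerivAt_rpow_const (Or.inl (ne_of_gt (lt_of_lt_of_le hm hx)))).hasDerivWithinAt
  have hbound : ∀ x ∈ Ici m, ‖β * x ^ (β - 1)‖ ≤ -β * m ^ (β - 1) := by
    intro x hx
    have hx' : m ≤ x := hx
    rw [norm_mul, Real.norm_eq_abs, Real.norm_eq_abs, abs_of_neg hβ0,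
      abs_of_nonneg (Real.rpow_nonneg (le_trans hm.le hx') _)]
    exact mul_le_mul_of_nonneg_left
      (Real.rpow_le_rpow_of_nonpos hm hx' (by linarith)) (by linarith)
  have key := (convex_Ici m).norm_image_sub_le_of_norm_hasDerivWithin_le hder hbound
    (Set.mem_Ici.mpr hb) (Set.mem_Ici.mpr ha)
  simpa [Real.norm_eq_abs] using key

/-! ### Kernel integral over an interval centered at `c` -/

lemma kern {α : ℝ} (hα : α ∈ Set.Ioo (0:ℝ) 1) (c : ℝ) {r : ℝ} (hr : 0 ≤ r) :
    IntegrableOn (fun x : ℝ => |c - x| ^ (α - 1)) (Icc (c - r) (c + r)) ∧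
      ∫ x in Icc (c - r) (c + r), |c - x| ^ (α - 1) = 2 * (r ^ α / α) := by
  have hβ : -1 < α - 1 := by linarith [hα.1]
  have hpre : Icc (c - r) (c + r) = (fun x : ℝ => c - x) ⁻¹' Icc (-r) r := by
    ext x
    simp only [mem_Icc, mem_preimage]
    constructor <;> intro hx <;> exact ⟨by linarith [hx.1, hx.2], by linarith [hx.1, hx.2]⟩
  obtain ⟨hi, hv⟩ := model_near hβ hr
  constructor
  · have h2 := refl_integrableOn (c := c) hi
    rwa [← hpre] at h2
  · have h2 := refl_setIntegral (fun y : ℝ => |y| ^ (α - 1)) c (Icc (-r) r)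
    rw [← hpre] at h2
    rw [h2, hv, show α - 1 + 1 = α by ring]

/-! ### The key estimate -/

lemma key {α : ℝ} (hα : α ∈ Set.Ioo (0:ℝ) 1) {s t : ℝ} (hts : t < s) :
    Integrable (fun x : ℝ => abs (|s - x| ^ (α - 1) - |t - x| ^ (α - 1))) ∧
      ∫ x : ℝ, abs (|s - x| ^ (α - 1) - |t - x| ^ (α - 1)) ≤
        ((2 * 3 ^ α + 2 * 2 ^ α) / α + 4) * (s - t) ^ α := by
  obtain ⟨hα0, hα1⟩ := hα
  set h : ℝ := s - t with hh_def
  have hh : 0 < h := by simp only [hh_def]; linarith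
  have hβ0 : α - 1 < 0 := by linarith
  set D : ℝ → ℝ := fun x => abs (|s - x| ^ (α - 1) - |t - x| ^ (α - 1)) with hD_def
  have hmeasD : Measurable D :=
    ((measurable_abs_rpow s (α - 1)).sub (measurable_abs_rpow t (α - 1))).abs
  set N : Set ℝ := Icc (t - 2*h) (t + 2*h) with hN_def
  set F : Set ℝ := {x : ℝ | 2*h < |x - t|} with hF_def
  have hNmem : ∀ x, x ∈ N ↔ |x - t| ≤ 2*h := by
    intro x
    rw [hN_def, mem_Icc, abs_le]
    constructor <;> intro hx <;> exact ⟨by linarith [hx.1, hx.2], by linarith [hx.1, hx.2]⟩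
  have hNmeas : MeasurableSet N := measurableSet_Icc
  have hFmeas : MeasurableSet F :=
    measurableSet_lt measurable_const (measurable_id.sub measurable_const).abs
  have hunion : N ∪ F = univ := by
    rw [eq_univ_iff_forall]
    intro x
    rcases le_or_gt (|x - t|) (2*h) with hc | hc
    · exact Or.inl ((hNmem x).mpr hc)
    · exact Or.inr hc
  have hdisj : Disjoint N F := by
    rw [Set.disjoint_left]
    intro x hx hx'
    have h1 := (hNmem x).mp hx
    have h2 : 2*h < |x - t| := hx'
    linarith
  -- kernel integrals
  obtain ⟨hks_int, hks_val⟩ := kern ⟨hα0, hα1⟩ s (show (0:ℝ) ≤ 3*h by linarith)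
  obtain ⟨hkt_int, hkt_val⟩ := kern ⟨hα0, hα1⟩ t (show (0:ℝ) ≤ 2*h by linarith)
  have hNsub : N ⊆ Icc (s - 3*h) (s + 3*h) := by
    intro x hx
    rw [hN_def, mem_Icc] at hx
    rw [mem_Icc]
    exact ⟨by linarith [hx.1, hx.2], by linarith [hx.1, hx.2]⟩
  have hks_N : IntegrableOn (fun x : ℝ => |s - x| ^ (α - 1)) N :=
    hks_int.mono_set hNsub
  have hkt_N : IntegrableOn (fun x : ℝ => |t - x| ^ (α - 1)) N := by
    rw [hN_def]; exact hkt_int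
  have hDN_bound : ∀ x, D x ≤ |s - x| ^ (α - 1) + |t - x| ^ (α - 1) := by
    intro x
    have habs := abs_sub ((|s - x|) ^ (α - 1)) ((|t - x|) ^ (α - 1))
    rwa [abs_of_nonneg (Real.rpow_nonneg (abs_nonneg _) _),
      abs_of_nonneg (Real.rpow_nonneg (abs_nonneg _) _)] at habs
  have hD_N : IntegrableOn D N := by
    refine Integrable.mono' (hks_N.add hkt_N) hmeasD.aestronglyMeasurable ?_
    refine (ae_restrict_iff' hNmeas).mpr (Filter.Eventually.of_forall fun x _ => ?_)
    rw [Real.norm_eq_abs, abs_abs]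
    exact hDN_bound x
  have hIN : ∫ x in N, D x ≤ 2 * ((3*h) ^ α / α) + 2 * ((2*h) ^ α / α) := by
    calc ∫ x in N, D x
        ≤ ∫ x in N, (|s - x| ^ (α - 1) + |t - x| ^ (α - 1)) :=
          setIntegral_mono_on hD_N (hks_N.add hkt_N) hNmeas fun x _ => hDN_bound x
      _ = (∫ x in N, |s - x| ^ (α - 1)) + ∫ x in N, |t - x| ^ (α - 1) :=
          integral_add hks_N hkt_N
      _ ≤ 2 * ((3*h) ^ α / α) + 2 * ((2*h) ^ α / α) := by
          have h1 : ∫ x in N, |s - x| ^ (α - 1) ≤ 2 * ((3*h) ^ α / α) := by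
            rw [← hks_val]
            refine setIntegral_mono_set hks_int ?_ (HasSubset.Subset.eventuallyLE hNsub)
            exact Filter.Eventually.of_forall fun x => Real.rpow_nonneg (abs_nonneg _) _
          have h2 : ∫ x in N, |t - x| ^ (α - 1) = 2 * ((2*h) ^ α / α) := by
            rw [hN_def]; exact hkt_val
          linarith
  -- far part
  have hDF_bound : ∀ x ∈ F, D x ≤ (1 - α) * 2 ^ (2 - α) * h * |t - x| ^ (α - 2) := by
    intro x hx
    have hxt : 2*h < |x - t| := hx
    have habs_xt : |t - x| = |x - t| := abs_sub_comm t x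
    have h1 : |t - x| / 2 ≤ |s - x| := by
      have h1a : |x - t| - |x - s| ≤ |(x - t) - (x - s)| := abs_sub_abs_le_abs_sub _ _
      have h1b : |(x - t) - (x - s)| = h := by
        rw [show (x - t) - (x - s) = s - t by ring, abs_of_pos (by linarith : (0:ℝ) < s - t)]
      rw [habs_xt, abs_sub_comm s x]
      linarith
    have h2 : |t - x| / 2 ≤ |t - x| := by linarith [abs_nonneg (t - x)]
    have hm : 0 < |t - x| / 2 := by rw [habs_xt]; linarith
    have hmvt := rpow_diff_le hβ0 hm h1 h2
    have h3 : abs (|s - x| - |t - x|) ≤ h := by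
      have h3a := abs_abs_sub_abs_le_abs_sub (s - x) (t - x)
      have h3b : |(s - x) - (t - x)| = h := by
        rw [show (s - x) - (t - x) = s - t by ring, abs_of_pos (by linarith : (0:ℝ) < s - t)]
      linarith
    have h4 : (|t - x| / 2) ^ (α - 1 - 1) = 2 ^ (2 - α) * |t - x| ^ (α - 2) := by
      rw [Real.div_rpow (abs_nonneg _) (by norm_num : (0:ℝ) ≤ 2),
        show α - 1 - 1 = α - 2 by ring, div_eq_mul_inv,
        ← Real.rpow_neg (by norm_num : (0:ℝ) ≤ 2), show -(α - 2) = 2 - α by ring]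
      ring
    have h5 : D x ≤ -(α - 1) * (|t - x| / 2) ^ (α - 1 - 1) * h := by
      refine hmvt.trans ?_
      have hnn : (0:ℝ) ≤ -(α - 1) * (|t - x| / 2) ^ (α - 1 - 1) :=
        mul_nonneg (by linarith) (Real.rpow_nonneg hm.le _)
      exact mul_le_mul_of_nonneg_left h3 hnn
    calc D x ≤ -(α - 1) * (|t - x| / 2) ^ (α - 1 - 1) * h := h5
      _ = (1 - α) * 2 ^ (2 - α) * h * |t - x| ^ (α - 2) := by rw [h4]; ring
  have hpreF : F = (fun x : ℝ => t - x) ⁻¹' {y : ℝ | 2*h < |y|} := by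
    ext x
    simp only [hF_def, mem_setOf_eq, mem_preimage, abs_sub_comm t x]
  obtain ⟨hfar_int0, hfar_val0⟩ := model_far (p := α - 2) (by linarith) (by linarith : (0:ℝ) < 2*h)
  have hkt_F : IntegrableOn (fun x : ℝ => |t - x| ^ (α - 2)) F := by
    have h2 := refl_integrableOn (c := t) hfar_int0
    rwa [← hpreF] at h2
  have hkt_F_val : ∫ x in F, |t - x| ^ (α - 2) = 2 * (-((2*h) ^ (α - 1)) / (α - 1)) := by
    have h2 := refl_setIntegral (fun y : ℝ => |y| ^ (α - 2)) t {y : ℝ | 2*h < |y|}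
    rw [← hpreF] at h2
    rw [h2, hfar_val0, show α - 2 + 1 = α - 1 by ring]
  have hD_F : IntegrableOn D F := by
    refine Integrable.mono' (hkt_F.const_mul ((1 - α) * 2 ^ (2 - α) * h))
      hmeasD.aestronglyMeasurable ?_
    refine (ae_restrict_iff' hFmeas).mpr (Filter.Eventually.of_forall fun x hx => ?_)
    rw [Real.norm_eq_abs, abs_abs]
    exact (hDF_bound x hx).trans (le_of_eq (by ring))
  have hIF : ∫ x in F, D x ≤ 4 * h ^ α := by
    have e1 : (2:ℝ) ^ (2 - α) * 2 ^ (α - 1) = 2 := by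
      rw [← Real.rpow_add (by norm_num : (0:ℝ) < 2)]
      norm_num
    have e2 : h * h ^ (α - 1) = h ^ α := by
      have := Real.rpow_add hh 1 (α - 1)
      rw [Real.rpow_one, show (1:ℝ) + (α - 1) = α by ring] at this
      exact this.symm
    calc ∫ x in F, D x
        ≤ ∫ x in F, ((1 - α) * 2 ^ (2 - α) * h) * |t - x| ^ (α - 2) := by
          refine setIntegral_mono_on hD_F (hkt_F.const_mul _) hFmeas fun x hx => ?_
          exact (hDF_bound x hx).trans (le_of_eq (by ring))
      _ = ((1 - α) * 2 ^ (2 - α) * h) * ∫ x in F, |t - x| ^ (α - 2) :=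
          integral_const_mul _ _
      _ = ((1 - α) * 2 ^ (2 - α) * h) * (2 * (-((2*h) ^ (α - 1)) / (α - 1))) := by
          rw [hkt_F_val]
      _ = 4 * h ^ α := by
          rw [Real.mul_rpow (by norm_num : (0:ℝ) ≤ 2) hh.le]
          have hne : (1:ℝ) - α ≠ 0 := by linarith
          have hne' : α - 1 ≠ 0 := by linarith
          have h4 : (1 - α) * 2 ^ (2 - α) * h * (2 * (-(2 ^ (α - 1) * h ^ (α - 1)) / (α - 1)))
              = 2 ^ (2 - α) * 2 ^ (α - 1) * (2 * (h * h ^ (α - 1))) := by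
            field_simp
            ring
          rw [h4, e1, e2]
          ring
  have hDint : Integrable D := by
    have hu : IntegrableOn D (N ∪ F) := hD_N.union hD_F
    rwa [hunion, integrableOn_univ] at hu
  refine ⟨hDint, ?_⟩
  have hsplit_int : ∫ x : ℝ, D x = (∫ x in N, D x) + ∫ x in F, D x := by
    rw [← setIntegral_univ (f := D), ← hunion, setIntegral_union hdisj hFmeas hD_N hD_F]
  rw [hsplit_int]
  have hfinal : 2 * ((3*h) ^ α / α) + 2 * ((2*h) ^ α / α) + 4 * h ^ α
      = ((2 * 3 ^ α + 2 * 2 ^ α) / α + 4) * h ^ α := by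
    rw [Real.mul_rpow (by norm_num : (0:ℝ) ≤ 3) hh.le,
      Real.mul_rpow (by norm_num : (0:ℝ) ≤ 2) hh.le]
    field_simp
  linarith [hIN, hIF]

end Statement19Aux

open Statement19Aux Set Real

/-- For α ∈ (0,1) and a bounded measurable f : ℝ → ℂ with
∫ |f(x)|/(1+|x|^{1−α}) dx < ∞, the Riesz potential (U_α f)(t) = ∫ f(x)·|t−x|^{α−1} dx
converges absolutely at every t, and there is C depending only on α with
|(U_α f)(s) − (U_α f)(t)| ≤ C·(sup |f|)·|s−t|^α; in particular U_α f is Hölder with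
exponent α. -/
theorem statement19 (α : ℝ) (hα : α ∈ Set.Ioo (0 : ℝ) 1) :
    ∃ C : ℝ, ∀ f : ℝ → ℂ, Measurable f → (∃ M : ℝ, ∀ x, ‖f x‖ ≤ M) →
      Integrable (fun x : ℝ => ‖f x‖ / (1 + |x| ^ (1 - α))) →
      (∀ t : ℝ, Integrable (fun x : ℝ => f x * ((|t - x| ^ (α - 1) : ℝ) : ℂ))) ∧
      (∀ s t : ℝ,
        ‖(∫ x : ℝ, f x * ((|s - x| ^ (α - 1) : ℝ) : ℂ)) -
            ∫ x : ℝ, f x * ((|t - x| ^ (α - 1) : ℝ) : ℂ)‖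
          ≤ C * (⨆ x : ℝ, ‖f x‖) * |s - t| ^ α) := by
  obtain ⟨hα0, hα1⟩ := hα
  refine ⟨(2 * 3 ^ α + 2 * 2 ^ α) / α + 4, ?_⟩
  intro f hfm ⟨M, hM⟩ hint
  have hM0 : (0:ℝ) ≤ M := le_trans (norm_nonneg _) (hM 0)
  have hbdd : BddAbove (Set.range fun x : ℝ => ‖f x‖) := ⟨M, by rintro _ ⟨x, rfl⟩; exact hM x⟩
  have hS0 : (0:ℝ) ≤ ⨆ x : ℝ, ‖f x‖ := le_trans (norm_nonneg (f 0)) (le_ciSup hbdd 0)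
  have hSle : ∀ x, ‖f x‖ ≤ ⨆ x : ℝ, ‖f x‖ := fun x => le_ciSup hbdd x
  -- measurability of the integrand
  have hmeas_int : ∀ t : ℝ,
      AEStronglyMeasurable (fun x : ℝ => f x * ((|t - x| ^ (α - 1) : ℝ) : ℂ)) volume := by
    intro t
    exact (hfm.mul (Complex.measurable_ofReal.comp (measurable_abs_rpow t (α - 1)))).aestronglyMeasurable
  have hnorm_int : ∀ t x : ℝ,
      ‖f x * ((|t - x| ^ (α - 1) : ℝ) : ℂ)‖ = ‖f x‖ * |t - x| ^ (α - 1) := by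
    intro t x
    rw [norm_mul, Complex.norm_real, Real.norm_eq_abs,
      abs_of_nonneg (Real.rpow_nonneg (abs_nonneg _) _)]
  -- Part 1 : integrability
  have part1 : ∀ t : ℝ, Integrable (fun x : ℝ => f x * ((|t - x| ^ (α - 1) : ℝ) : ℂ)) := by
    intro t
    set K : ℝ := 1 + (1 + |t|) ^ (1 - α) with hK_def
    have hnear : IntegrableOn (fun x : ℝ => f x * ((|t - x| ^ (α - 1) : ℝ) : ℂ))
        (Icc (t - 1) (t + 1)) := by
      refine Integrable.mono' (((kern ⟨hα0, hα1⟩ t (zero_le_one)).1).const_mul M)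
        ((hmeas_int t).restrict) ?_
      refine (ae_restrict_iff' measurableSet_Icc).mpr (Filter.Eventually.of_forall fun x _ => ?_)
      rw [hnorm_int t x]
      exact mul_le_mul_of_nonneg_right (hM x) (Real.rpow_nonneg (abs_nonneg _) _)
    have hfar : IntegrableOn (fun x : ℝ => f x * ((|t - x| ^ (α - 1) : ℝ) : ℂ))
        {x : ℝ | 1 < |x - t|} := by
      have hFmeas1 : MeasurableSet {x : ℝ | 1 < |x - t|} :=
        measurableSet_lt measurable_const (measurable_id.sub measurable_const).abs
      refine Integrable.mono' ((hint.const_mul K).restrict)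
        ((hmeas_int t).restrict) ?_
      refine (ae_restrict_iff' hFmeas1).mpr (Filter.Eventually.of_forall fun x hx => ?_)
      have hx1 : 1 < |x - t| := hx
      have hxt_pos : (0:ℝ) < |x - t| := by linarith
      have hbase : (1:ℝ) ≤ |x - t| := hx1.le
      -- (1 + |x|^{1-α}) * |t-x|^{α-1} ≤ K
      have hxle : |x| ≤ |x - t| + |t| := by
        calc |x| = |(x - t) + t| := by ring_nf
          _ ≤ |x - t| + |t| := abs_add_le _ _
      have hstep1 : |x| ^ (1 - α) ≤ (|x - t| * (1 + |t|)) ^ (1 - α) := by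
        refine Real.rpow_le_rpow (abs_nonneg _) ?_ (by linarith)
        nlinarith [abs_nonneg (x - t), abs_nonneg t]
      have hstep2 : (|x - t| * (1 + |t|)) ^ (1 - α)
          = |x - t| ^ (1 - α) * (1 + |t|) ^ (1 - α) :=
        Real.mul_rpow (abs_nonneg _) (by linarith [abs_nonneg t])
      have hstep3 : (1:ℝ) ≤ |x - t| ^ (1 - α) :=
        Real.one_le_rpow hbase (by linarith)
      have hstep4 : (1 + |x| ^ (1 - α)) ≤ |x - t| ^ (1 - α) * K := by
        rw [hK_def]
        have := hstep1.trans_eq hstep2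
        nlinarith [Real.rpow_nonneg (abs_nonneg (x - t)) (1 - α),
          Real.rpow_nonneg (by linarith [abs_nonneg t] : (0:ℝ) ≤ 1 + |t|) (1 - α)]
      have hprod : |x - t| ^ (1 - α) * |t - x| ^ (α - 1) = 1 := by
        rw [abs_sub_comm t x, ← Real.rpow_add hxt_pos]
        norm_num
      have hkbound : (1 + |x| ^ (1 - α)) * |t - x| ^ (α - 1) ≤ K := by
        calc (1 + |x| ^ (1 - α)) * |t - x| ^ (α - 1)
            ≤ (|x - t| ^ (1 - α) * K) * |t - x| ^ (α - 1) :=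
              mul_le_mul_of_nonneg_right hstep4 (Real.rpow_nonneg (abs_nonneg _) _)
          _ = K * (|x - t| ^ (1 - α) * |t - x| ^ (α - 1)) := by ring
          _ = K := by rw [hprod, mul_one]
      have hdenom : (0:ℝ) < 1 + |x| ^ (1 - α) := by
        have := Real.rpow_nonneg (abs_nonneg x) (1 - α); linarith
      rw [hnorm_int t x]
      have : ‖f x‖ * |t - x| ^ (α - 1)
          = (‖f x‖ / (1 + |x| ^ (1 - α))) * ((1 + |x| ^ (1 - α)) * |t - x| ^ (α - 1)) := by
        field_simp
      rw [this]
      calc (‖f x‖ / (1 + |x| ^ (1 - α))) * ((1 + |x| ^ (1 - α)) * |t - x| ^ (α - 1))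
          ≤ (‖f x‖ / (1 + |x| ^ (1 - α))) * K := by
            refine mul_le_mul_of_nonneg_left hkbound ?_
            positivity
        _ = K * (‖f x‖ / (1 + |x| ^ (1 - α))) := by ring
    have huniv : Icc (t - 1) (t + 1) ∪ {x : ℝ | 1 < |x - t|} = univ := by
      rw [eq_univ_iff_forall]
      intro x
      rcases le_or_gt (|x - t|) 1 with hc | hc
      · left
        rw [mem_Icc]
        rw [abs_le] at hc
        constructor <;> linarith [hc.1, hc.2]
      · exact Or.inr hc
    have := hnear.union hfar
    rwa [huniv, integrableOn_univ] at this
  refine ⟨part1, ?_⟩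
  -- Part 2 : Hölder estimate
  have main : ∀ s t : ℝ, t < s →
      ‖(∫ x : ℝ, f x * ((|s - x| ^ (α - 1) : ℝ) : ℂ)) -
          ∫ x : ℝ, f x * ((|t - x| ^ (α - 1) : ℝ) : ℂ)‖
        ≤ ((2 * 3 ^ α + 2 * 2 ^ α) / α + 4) * (⨆ x : ℝ, ‖f x‖) * (s - t) ^ α := by
    intro s t hts
    obtain ⟨hDint, hDval⟩ := key ⟨hα0, hα1⟩ hts
    have hsub : (∫ x : ℝ, f x * ((|s - x| ^ (α - 1) : ℝ) : ℂ)) -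
        ∫ x : ℝ, f x * ((|t - x| ^ (α - 1) : ℝ) : ℂ)
        = ∫ x : ℝ, (f x * ((|s - x| ^ (α - 1) : ℝ) : ℂ) -
            f x * ((|t - x| ^ (α - 1) : ℝ) : ℂ)) :=
      (integral_sub (part1 s) (part1 t)).symm
    rw [hsub]
    have hptwise : ∀ x : ℝ, ‖f x * ((|s - x| ^ (α - 1) : ℝ) : ℂ) -
        f x * ((|t - x| ^ (α - 1) : ℝ) : ℂ)‖
        ≤ (⨆ x : ℝ, ‖f x‖) * abs (|s - x| ^ (α - 1) - |t - x| ^ (α - 1)) := by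
      intro x
      rw [← mul_sub, norm_mul, ← Complex.ofReal_sub, Complex.norm_real, Real.norm_eq_abs]
      exact mul_le_mul_of_nonneg_right (hSle x) (abs_nonneg _)
    calc ‖∫ x : ℝ, (f x * ((|s - x| ^ (α - 1) : ℝ) : ℂ) -
            f x * ((|t - x| ^ (α - 1) : ℝ) : ℂ))‖
        ≤ ∫ x : ℝ, ‖f x * ((|s - x| ^ (α - 1) : ℝ) : ℂ) -
            f x * ((|t - x| ^ (α - 1) : ℝ) : ℂ)‖ := norm_integral_le_integral_norm _
      _ ≤ ∫ x : ℝ, (⨆ x : ℝ, ‖f x‖) * abs (|s - x| ^ (α - 1) - |t - x| ^ (α - 1)) := by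
          refine integral_mono ((part1 s).sub (part1 t)).norm (hDint.const_mul _) ?_
          exact hptwise
      _ = (⨆ x : ℝ, ‖f x‖) * ∫ x : ℝ, abs (|s - x| ^ (α - 1) - |t - x| ^ (α - 1)) :=
          integral_const_mul _ _
      _ ≤ (⨆ x : ℝ, ‖f x‖) * (((2 * 3 ^ α + 2 * 2 ^ α) / α + 4) * (s - t) ^ α) :=
          mul_le_mul_of_nonneg_left hDval hS0
      _ = ((2 * 3 ^ α + 2 * 2 ^ α) / α + 4) * (⨆ x : ℝ, ‖f x‖) * (s - t) ^ α := by ring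
  intro s t
  rcases lt_trichotomy s t with hc | hc | hc
  · have := main t s hc
    rw [norm_sub_rev] at this
    rwa [abs_sub_comm s t, abs_of_pos (by linarith : (0:ℝ) < t - s)]
  · subst hc
    simp only [sub_self, norm_zero, abs_zero, Real.zero_rpow (ne_of_gt hα0), mul_zero]
    exact le_rfl
  · have := main s t hc
    rwa [abs_of_pos (by linarith : (0:ℝ) < s - t)]
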